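/- Let a₁, ..., a_r be multisegments (finite multisets of segments) such that whenever Δ ∈ a_i and Δ' ∈ a_j are linked, then i = j. Then, in the partial order on multisegments generated by elementary operations (replacing a pair of linked segments Δ, Δ' by Δ ∪ Δ' and Δ ∩ Δ', deleting the intersection if empty), the multisegments b with b ≤ a₁ + ⋯ + a_r are exactly those of the form b = b₁ + ⋯ + b_r with b_i ≤ a_i for each i. -/

import Mathlib

/-- A segment, encoded as a pair `(a, b)` with `b - a` a nonnegative integer. -/
def IsSeg (a b : ℝ) : Prop := ∃ k : ℕ, b = a + k

/-- Segments `(a,b)` and `(c,d)` are linked. -/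
def LinkedP (Δ Δ' : ℝ × ℝ) : Prop :=
  (∃ m : ℤ, Δ.1 - Δ'.1 = (m : ℝ)) ∧
  ((Δ.1 < Δ'.1 ∧ Δ'.1 - 1 ≤ Δ.2 ∧ Δ.2 < Δ'.2) ∨
   (Δ'.1 ≤ Δ.1 ∧ Δ.1 ≤ Δ'.2 + 1 ∧ Δ'.2 < Δ.2))

/-- The union of two linked segments. -/
def segUnion (Δ Δ' : ℝ × ℝ) : ℝ × ℝ := (min Δ.1 Δ'.1, max Δ.2 Δ'.2)

/-- The intersection of two linked segments (meaningful when nonempty). -/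
def segInter (Δ Δ' : ℝ × ℝ) : ℝ × ℝ := (max Δ.1 Δ'.1, min Δ.2 Δ'.2)

/-- An elementary operation on a multisegment: replace a linked pair `Δ, Δ'`
by `Δ ∪ Δ'` and `Δ ∩ Δ'`, deleting the intersection if it is empty. -/
def ElemOp (m m' : Multiset (ℝ × ℝ)) : Prop :=
  ∃ (Δ Δ' : ℝ × ℝ) (rest : Multiset (ℝ × ℝ)),
    LinkedP Δ Δ' ∧ m = Δ ::ₘ Δ' ::ₘ rest ∧
    ((max Δ.1 Δ'.1 ≤ min Δ.2 Δ'.2 ∧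
        m' = segUnion Δ Δ' ::ₘ segInter Δ Δ' ::ₘ rest) ∨
     (¬ max Δ.1 Δ'.1 ≤ min Δ.2 Δ'.2 ∧ m' = segUnion Δ Δ' ::ₘ rest))

/-- `b ≤ a` in the ordering of multisegments: `b` is obtained from `a` by a
finite sequence of elementary operations. -/
def MsLe (b a : Multiset (ℝ × ℝ)) : Prop := Relation.ReflTransGen ElemOp a b

/-- symmetric linkage -/
def SL (A B : ℝ × ℝ) : Prop := LinkedP A B ∨ LinkedP B A

def Cle (A B : ℝ × ℝ) : Prop := A.1 ≤ B.1 ∧ B.1 ≤ A.2 + 1 ∧ A.2 < B.2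

lemma sl_iff (A B : ℝ × ℝ) :
    SL A B ↔ (∃ m : ℤ, A.1 - B.1 = (m : ℝ)) ∧ (Cle A B ∨ Cle B A) := by
  constructor
  · rintro (⟨⟨m, hm⟩, h⟩ | ⟨⟨m, hm⟩, h⟩)
    · refine ⟨⟨m, hm⟩, ?_⟩
      exact h.imp (fun h => ⟨le_of_lt h.1, by linarith [h.2.1], h.2.2⟩)
        (fun h => ⟨h.1, h.2.1, h.2.2⟩)
    · refine ⟨⟨-m, by push_cast; linarith⟩, ?_⟩
      exact (h.imp (fun h => ⟨le_of_lt h.1, by linarith [h.2.1], h.2.2⟩)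
        (fun h => ⟨h.1, h.2.1, h.2.2⟩)).symm
  · rintro ⟨⟨m, hm⟩, (h | h)⟩
    · exact Or.inr ⟨⟨-m, by push_cast; linarith⟩, Or.inr ⟨h.1, h.2.1, h.2.2⟩⟩
    · exact Or.inl ⟨⟨m, hm⟩, Or.inr ⟨h.1, h.2.1, h.2.2⟩⟩

lemma sl_symm {A B : ℝ × ℝ} (h : SL A B) : SL B A := h.symm

lemma key_aux (Δ Δ' Γ : ℝ × ℝ) (hm : ∃ m : ℤ, Δ.1 - Δ'.1 = (m : ℝ)) (hC : Cle Δ Δ')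
    (h : SL Γ (segUnion Δ Δ') ∨ (max Δ.1 Δ'.1 ≤ min Δ.2 Δ'.2 ∧ SL Γ (segInter Δ Δ'))) :
    SL Γ Δ ∨ SL Γ Δ' := by
  obtain ⟨m, hm⟩ := hm
  obtain ⟨hx, hxy, hy⟩ := hC
  have hU1 : (segUnion Δ Δ').1 = Δ.1 := min_eq_left hx
  have hU2 : (segUnion Δ Δ').2 = Δ'.2 := max_eq_right (le_of_lt hy)
  have hI1 : (segInter Δ Δ').1 = Δ'.1 := max_eq_right hx
  have hI2 : (segInter Δ Δ').2 = Δ.2 := min_eq_left (le_of_lt hy)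
  rcases h with h | ⟨hne, h⟩
  · rw [sl_iff] at h
    obtain ⟨⟨n, hn⟩, h⟩ := h
    rw [hU1] at hn
    unfold Cle at h
    rw [hU1, hU2] at h
    rcases h with ⟨h1, h2, h3⟩ | ⟨h1, h2, h3⟩
    · rcases lt_or_ge Γ.2 Δ.2 with hv | hv
      · exact Or.inl ((sl_iff _ _).2 ⟨⟨n, hn⟩, Or.inl ⟨h1, h2, hv⟩⟩)
      · exact Or.inr ((sl_iff _ _).2 ⟨⟨n + m, by push_cast; linarith⟩,
          Or.inl ⟨by linarith, by linarith, h3⟩⟩)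
    · rcases le_or_gt Γ.1 (Δ.2 + 1) with hu | hu
      · exact Or.inl ((sl_iff _ _).2 ⟨⟨n, hn⟩, Or.inr ⟨h1, hu, by linarith⟩⟩)
      · exact Or.inr ((sl_iff _ _).2 ⟨⟨n + m, by push_cast; linarith⟩,
          Or.inr ⟨by linarith, h2, h3⟩⟩)
  · rw [sl_iff] at h
    obtain ⟨⟨n, hn⟩, h⟩ := h
    rw [hI1] at hn
    unfold Cle at h
    rw [hI1, hI2] at h
    rcases h with ⟨h1, h2, h3⟩ | ⟨h1, h2, h3⟩
    · exact Or.inr ((sl_iff _ _).2 ⟨⟨n, hn⟩, Or.inl ⟨h1, h2, by linarith⟩⟩)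
    · exact Or.inl ((sl_iff _ _).2 ⟨⟨n - m, by push_cast; linarith⟩,
        Or.inr ⟨by linarith, h2, h3⟩⟩)

lemma segUnion_comm (Δ Δ' : ℝ × ℝ) : segUnion Δ' Δ = segUnion Δ Δ' := by
  simp [segUnion, min_comm, max_comm]

lemma segInter_comm (Δ Δ' : ℝ × ℝ) : segInter Δ' Δ = segInter Δ Δ' := by
  simp [segInter, min_comm, max_comm]

lemma key (Δ Δ' Γ : ℝ × ℝ) (h : LinkedP Δ Δ')
    (hU : SL Γ (segUnion Δ Δ') ∨ (max Δ.1 Δ'.1 ≤ min Δ.2 Δ'.2 ∧ SL Γ (segInter Δ Δ'))) :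
    SL Γ Δ ∨ SL Γ Δ' := by
  have h' : SL Δ Δ' := Or.inl h
  rw [sl_iff] at h'
  obtain ⟨⟨m, hm⟩, hC | hC⟩ := h'
  · exact key_aux Δ Δ' Γ ⟨m, hm⟩ hC hU
  · refine (key_aux Δ' Δ Γ ⟨-m, by push_cast; linarith⟩ hC ?_).symm
    rw [segUnion_comm, segInter_comm, max_comm Δ'.1 Δ.1, min_comm Δ'.2 Δ.2]
    exact hU

lemma persist_step {m m' : Multiset (ℝ × ℝ)} (h : ElemOp m m') {Γ Δ : ℝ × ℝ}
    (hΔ : Δ ∈ m') (hl : SL Γ Δ) : ∃ Δ₀ ∈ m, SL Γ Δ₀ := by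
  obtain ⟨A, B, rest, hAB, hmeq, hcase⟩ := h
  subst hmeq
  rcases hcase with ⟨hne, hm'⟩ | ⟨hne, hm'⟩
  · subst hm'
    rcases Multiset.mem_cons.1 hΔ with h1 | hΔ
    · subst h1
      rcases key A B Γ hAB (Or.inl hl) with h | h
      exacts [⟨A, by simp, h⟩, ⟨B, by simp, h⟩]
    rcases Multiset.mem_cons.1 hΔ with h1 | hΔ
    · subst h1
      rcases key A B Γ hAB (Or.inr ⟨hne, hl⟩) with h | h
      exacts [⟨A, by simp, h⟩, ⟨B, by simp, h⟩]
    · exact ⟨Δ, by simp [hΔ], hl⟩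
  · subst hm'
    rcases Multiset.mem_cons.1 hΔ with h1 | hΔ
    · subst h1
      rcases key A B Γ hAB (Or.inl hl) with h | h
      exacts [⟨A, by simp, h⟩, ⟨B, by simp, h⟩]
    · exact ⟨Δ, by simp [hΔ], hl⟩

lemma persist {a b : Multiset (ℝ × ℝ)} (h : MsLe b a) (Γ : ℝ × ℝ) :
    ∀ Δ ∈ b, SL Γ Δ → ∃ Δ₀ ∈ a, SL Γ Δ₀ := by
  induction h with
  | refl => exact fun Δ hΔ hl => ⟨Δ, hΔ, hl⟩
  | tail h1 h2 ih =>
      intro Δ hΔ hl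
      obtain ⟨Δ₀, h₀, hl₀⟩ := persist_step h2 hΔ hl
      exact ih Δ₀ h₀ hl₀

lemma elemOp_add {m m' : Multiset (ℝ × ℝ)} (c : Multiset (ℝ × ℝ)) (h : ElemOp m m') :
    ElemOp (m + c) (m' + c) := by
  obtain ⟨A, B, rest, hAB, h1, h2⟩ := h
  refine ⟨A, B, rest + c, hAB, by simp [h1, Multiset.cons_add], ?_⟩
  rcases h2 with ⟨hne, h2⟩ | ⟨hne, h2⟩
  · exact Or.inl ⟨hne, by simp [h2, Multiset.cons_add]⟩
  · exact Or.inr ⟨hne, by simp [h2, Multiset.cons_add]⟩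

lemma msle_add {b a : Multiset (ℝ × ℝ)} (c : Multiset (ℝ × ℝ)) (h : MsLe b a) :
    MsLe (b + c) (a + c) := by
  induction h with
  | refl => exact Relation.ReflTransGen.refl
  | tail h1 h2 ih => exact ih.tail (elemOp_add c h2)

lemma msle_add₂ {b a b' a' : Multiset (ℝ × ℝ)} (h : MsLe b a) (h' : MsLe b' a') :
    MsLe (b + b') (a + a') := by
  have t1 : MsLe (b + b') (a + b') := msle_add b' h
  have t2 : MsLe (a + b') (a + a') := by
    rw [add_comm a b', add_comm a a']; exact msle_add a h'
  exact Relation.ReflTransGen.trans t2 t1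

lemma msle_sum {ι : Type*} (s : Finset ι) (f g : ι → Multiset (ℝ × ℝ))
    (h : ∀ i ∈ s, MsLe (f i) (g i)) :
    MsLe (∑ i ∈ s, f i) (∑ i ∈ s, g i) := by
  classical
  induction s using Finset.induction with
  | empty =>
      simp only [Finset.sum_empty]
      exact Relation.ReflTransGen.refl
  | insert j s hni ih =>
      rw [Finset.sum_insert hni, Finset.sum_insert hni]
      exact msle_add₂ (h j (by simp)) (ih fun i hi => h i (by simp [hi]))

theorem msle_sum_iff (r : ℕ) (a : Fin r → Multiset (ℝ × ℝ))
    (hseg : ∀ (i : Fin r) (Δ : ℝ × ℝ), Δ ∈ a i → IsSeg Δ.1 Δ.2)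
    (ha : ∀ (i j : Fin r) (Δ Δ' : ℝ × ℝ), Δ ∈ a i → Δ' ∈ a j → LinkedP Δ Δ' → i = j) :
    ∀ b : Multiset (ℝ × ℝ),
      MsLe b (∑ i, a i) ↔
        ∃ b' : Fin r → Multiset (ℝ × ℝ),
          (∀ i, MsLe (b' i) (a i)) ∧ b = ∑ i, b' i := by
  intro b
  constructor
  · intro h
    induction h with
    | refl => exact ⟨a, fun i => Relation.ReflTransGen.refl, rfl⟩
    | tail h1 hop ih =>
        obtain ⟨b', hb', rfl⟩ := ih
        obtain ⟨A, B, rest, hAB, hceq, hcase⟩ := hop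
        have hA : A ∈ ∑ i, b' i := by rw [hceq]; simp
        obtain ⟨i, -, hAi⟩ := Multiset.mem_sum.1 hA
        set S : Multiset (ℝ × ℝ) := ∑ j ∈ Finset.univ.erase i, b' j with hS
        have hsplit : ∑ j, b' j = b' i + S :=
          (Finset.add_sum_erase _ _ (Finset.mem_univ i)).symm
        have hBmem : B ∈ (b' i).erase A + S := by
          rw [← Multiset.erase_add_left_pos S hAi, ← hsplit, hceq]
          simp
        have hB : B ∈ (b' i).erase A := by
          rcases Multiset.mem_add.1 hBmem with hB | hB
          · exact hB
          · exfalso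
            obtain ⟨j, hj, hBj⟩ := Multiset.mem_sum.1 hB
            have hji : j ≠ i := Finset.ne_of_mem_erase hj
            obtain ⟨A₀, hA₀, hl₀⟩ := persist (hb' i) B A hAi (Or.inr hAB)
            obtain ⟨B₀, hB₀, hl₁⟩ := persist (hb' j) A₀ B hBj hl₀.symm
            rcases hl₁ with hl | hl
            · exact hji (ha i j A₀ B₀ hA₀ hB₀ hl).symm
            · exact hji (ha j i B₀ A₀ hB₀ hA₀ hl)
        set rest_i : Multiset (ℝ × ℝ) := ((b' i).erase A).erase B with hri
        have hbi : b' i = A ::ₘ B ::ₘ rest_i := by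
          rw [hri, Multiset.cons_erase hB, Multiset.cons_erase hAi]
        have hrest : rest = rest_i + S := by
          have : A ::ₘ B ::ₘ rest = A ::ₘ B ::ₘ (rest_i + S) := by
            rw [← Multiset.cons_add, ← Multiset.cons_add, ← hbi, ← hsplit, ← hceq]
          exact ((Multiset.cons_inj_right _).1 ((Multiset.cons_inj_right _).1 this))
        classical
        rcases hcase with ⟨hne, hbeq⟩ | ⟨hne, hbeq⟩
        · set np : Multiset (ℝ × ℝ) := segUnion A B ::ₘ segInter A B ::ₘ rest_i with hnp
          have hop_i : ElemOp (b' i) np := ⟨A, B, rest_i, hAB, hbi, Or.inl ⟨hne, rfl⟩⟩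
          refine ⟨Function.update b' i np, ?_, ?_⟩
          · intro j
            by_cases hj : j = i
            · subst hj; rw [Function.update_self]; exact (hb' j).tail hop_i
            · rw [Function.update_of_ne hj]; exact hb' j
          · rw [Finset.sum_update_of_mem (Finset.mem_univ i), Finset.sdiff_singleton_eq_erase, ← hS, hbeq, hrest, hnp]
            simp [Multiset.cons_add]
        · set np : Multiset (ℝ × ℝ) := segUnion A B ::ₘ rest_i with hnp
          have hop_i : ElemOp (b' i) np := ⟨A, B, rest_i, hAB, hbi, Or.inr ⟨hne, rfl⟩⟩
          refine ⟨Function.update b' i np, ?_, ?_⟩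
          · intro j
            by_cases hj : j = i
            · subst hj; rw [Function.update_self]; exact (hb' j).tail hop_i
            · rw [Function.update_of_ne hj]; exact hb' j
          · rw [Finset.sum_update_of_mem (Finset.mem_univ i), Finset.sdiff_singleton_eq_erase, ← hS, hbeq, hrest, hnp]
            simp [Multiset.cons_add]
  · rintro ⟨b', hb', rfl⟩
    exact msle_sum Finset.univ b' a fun i _ => hb' i
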